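/- There exists a c.e. set A ⊆ ℕ which is not generically similar to any co-c.e. set (i.e. for every c.e. set W, the symmetric difference A △ (ℕ \ W) does not have density 0); consequently A is neither coarsely computable nor generically computable. -/

import Mathlib

open Filter

open scoped Classical in
/-- `ρ_n(A) = |A ∩ {0,…,n}| / (n+1)`. -/
noncomputable def partialDensity (A : Set ℕ) (n : ℕ) : ℝ :=
  ((Finset.range (n + 1)).filter (· ∈ A)).card / (n + 1)

/-- The upper density of `A`: `limsup_n ρ_n(A)`. -/
noncomputable def upperDensity (A : Set ℕ) : ℝ :=
  Filter.limsup (partialDensity A) Filter.atTop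

/-- `A` has asymptotic density `r`: `ρ_n(A) → r`. -/
def HasDensity (A : Set ℕ) (r : ℝ) : Prop :=
  Filter.Tendsto (partialDensity A) Filter.atTop (nhds r)

open scoped Classical in
/-- The characteristic function of `A` (with values in `{0,1} ⊆ ℕ`). -/
noncomputable def charFun (A : Set ℕ) : ℕ → ℕ := fun n => if n ∈ A then 1 else 0

/-- `Φ` is a generic description of `A`: `Φ(x) = χ_A(x)` whenever `Φ(x)` is defined,
and the domain of `Φ` has density 1. -/
def IsGenericDescription (Φ : ℕ →. ℕ) (A : Set ℕ) : Prop :=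
  (∀ x m, m ∈ Φ x → m = charFun A x) ∧ HasDensity {x | (Φ x).Dom} 1

/-- `A` is generically computable: some partial computable function is a generic
description of `A`. -/
def GenericallyComputable (A : Set ℕ) : Prop :=
  ∃ Φ : ℕ →. ℕ, Partrec Φ ∧ IsGenericDescription Φ A

/-- `A` is computably enumerable: `A` is the domain of a partial computable function. -/
def CE (A : Set ℕ) : Prop :=
  ∃ f : ℕ →. ℕ, Partrec f ∧ A = {x | (f x).Dom}

/-- `A` is a computable set. -/
def ComputableSet (A : Set ℕ) : Prop := ComputablePred (· ∈ A)

/-- `A` is immune: infinite, with no infinite c.e. subset. -/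
def Immune (A : Set ℕ) : Prop :=
  A.Infinite ∧ ∀ W : Set ℕ, CE W → W.Infinite → ¬W ⊆ A

/-- `A` is bi-immune: both `A` and its complement are immune. -/
def BiImmune (A : Set ℕ) : Prop := Immune A ∧ Immune Aᶜ

/-- `A` and `B` are generically similar: their symmetric difference has density 0. -/
def GenericallySimilar (A B : Set ℕ) : Prop := HasDensity (symmDiff A B) 0

/-- `A` is coarsely computable: generically similar to a computable set. -/
def CoarselyComputable (A : Set ℕ) : Prop :=
  ∃ C : Set ℕ, ComputableSet C ∧ GenericallySimilar A C

/-- `R_k = {m : 2^k ∣ m, 2^(k+1) ∤ m}`. -/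
def Rset (k : ℕ) : Set ℕ := {m | 2 ^ k ∣ m ∧ ¬2 ^ (k + 1) ∣ m}

/-- `R(A) = ⋃_{n ∈ A} R_n`. -/
def RofSet (A : Set ℕ) : Set ℕ := ⋃ n ∈ A, Rset n

/-- Partial functions `ℕ →. ℕ` computable relative to a (total) oracle `O : ℕ → ℕ`. -/
inductive OracleRecursiveIn (O : ℕ → ℕ) : (ℕ →. ℕ) → Prop
  | zero : OracleRecursiveIn O (pure 0)
  | succ : OracleRecursiveIn O fun n => Part.some (n + 1)
  | left : OracleRecursiveIn O fun n => Part.some (Nat.unpair n).1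
  | right : OracleRecursiveIn O fun n => Part.some (Nat.unpair n).2
  | oracle : OracleRecursiveIn O fun n => Part.some (O n)
  | pair {f g : ℕ →. ℕ} : OracleRecursiveIn O f → OracleRecursiveIn O g →
      OracleRecursiveIn O fun n => Nat.pair <$> f n <*> g n
  | comp {f g : ℕ →. ℕ} : OracleRecursiveIn O f → OracleRecursiveIn O g →
      OracleRecursiveIn O fun n => g n >>= f
  | prec {f g : ℕ →. ℕ} : OracleRecursiveIn O f → OracleRecursiveIn O g →
      OracleRecursiveIn O (Nat.unpaired fun a n =>
        n.rec (f a) fun y IH => do let i ← IH; g (Nat.pair a (Nat.pair y i)))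
  | rfind {f : ℕ →. ℕ} : OracleRecursiveIn O f →
      OracleRecursiveIn O fun a => Nat.rfind fun n => (fun m => m = 0) <$> f (Nat.pair a n)

/-- `A ≤_T B`: the characteristic function of `A` is computable relative to `B`. -/
def SetTuringReducible (A B : Set ℕ) : Prop :=
  OracleRecursiveIn (charFun B) fun n => Part.some (charFun A n)

/-- `A ≡_T B`. -/
def SetTuringEquivalent (A B : Set ℕ) : Prop :=
  SetTuringReducible A B ∧ SetTuringReducible B A

section StmtTenAux

open Nat.Partrec (Code)
open Nat.Partrec.Code

/-- The stage-`s` count of apparent elements of `W_{(unpair j).1}` in `[2^j, 2^(j+1))`. -/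
private def cnt (j s : ℕ) : ℕ :=
  ((List.range (2 ^ (j + 1))).filter fun x =>
    decide (2 ^ j ≤ x) && (evaln s (Denumerable.ofNat Code j.unpair.1) x).isSome).length

private def trigger (j : ℕ) : Prop := ∃ s, 2 ^ j ≤ 2 * cnt j s

/-- The c.e. set witnessing the theorem. -/
private def Aset : Set ℕ := {m | ∃ j, 2 ^ j ≤ m ∧ m < 2 ^ (j + 1) ∧ trigger j}

private def apred (m s j : ℕ) : Bool :=
  (decide (2 ^ j ≤ m) && decide (m < 2 ^ (j + 1))) && decide (2 ^ j ≤ 2 * cnt j s)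

private def Ffun (m s : ℕ) : ℕ := ((List.range (m + 1)).filter (apred m s)).length

private lemma filterMap_bif {α : Type*} (p : α → Bool) (l : List α) :
    l.filterMap (fun x => bif p x then some x else none) = l.filter p := by
  induction l with
  | nil => rfl
  | cons a l ih => cases h : p a <;> simp [List.filterMap_cons, List.filter_cons, h, ih]

private lemma hpow2 : Primrec₂ (fun a b : ℕ => a ^ b) := Primrec₂.unpaired'.1 Nat.Primrec.pow

private lemma cnt_primrec : Primrec₂ cnt := by
  have hwp : Primrec fun q : (ℕ × ℕ) × ℕ =>
      (decide (2 ^ q.1.1 ≤ q.2) &&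
        (evaln q.1.2 (Denumerable.ofNat Code q.1.1.unpair.1) q.2).isSome) := by
    apply Primrec.and.comp
    · exact PrimrecPred.decide (Primrec.nat_le.comp
        (hpow2.comp (Primrec.const 2) (Primrec.fst.comp Primrec.fst)) Primrec.snd)
    · exact Primrec.option_isSome.comp (primrec_evaln.comp
        (((Primrec.snd.comp Primrec.fst).pair
          ((Primrec.ofNat Code).comp (Primrec.fst.comp
            (Primrec.unpair.comp (Primrec.fst.comp Primrec.fst))))).pair Primrec.snd))
  have h1 : Primrec fun a : ℕ × ℕ =>
      (List.range (2 ^ (a.1 + 1))).filterMap fun x =>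
        bif (decide (2 ^ a.1 ≤ x) &&
          (evaln a.2 (Denumerable.ofNat Code a.1.unpair.1) x).isSome) then some x else none := by
    exact Primrec.listFilterMap
      (Primrec.list_range.comp (hpow2.comp (Primrec.const 2) (Primrec.succ.comp Primrec.fst)))
      (Primrec.cond hwp (Primrec.option_some.comp Primrec.snd) (Primrec.const none)).to₂
  exact ((Primrec.list_length.comp h1).of_eq fun a => by
    rw [filterMap_bif]; rfl)

private lemma Ffun_primrec : Primrec₂ Ffun := by
  have hap : Primrec fun q : (ℕ × ℕ) × ℕ => apred q.1.1 q.1.2 q.2 := by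
    apply Primrec.and.comp
    · apply Primrec.and.comp
      · exact PrimrecPred.decide (Primrec.nat_le.comp (hpow2.comp (Primrec.const 2) Primrec.snd)
          (Primrec.fst.comp Primrec.fst))
      · exact PrimrecPred.decide (Primrec.nat_lt.comp (Primrec.fst.comp Primrec.fst)
          (hpow2.comp (Primrec.const 2) (Primrec.succ.comp Primrec.snd)))
    · exact PrimrecPred.decide (Primrec.nat_le.comp (hpow2.comp (Primrec.const 2) Primrec.snd)
        (Primrec.nat_mul.comp (Primrec.const 2)
          (cnt_primrec.comp Primrec.snd (Primrec.snd.comp Primrec.fst))))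
  have h1 : Primrec fun a : ℕ × ℕ =>
      (List.range (a.1 + 1)).filterMap fun j =>
        bif apred a.1 a.2 j then some j else none := by
    exact Primrec.listFilterMap (Primrec.list_range.comp (Primrec.succ.comp Primrec.fst))
      (Primrec.cond hap (Primrec.option_some.comp Primrec.snd) (Primrec.const none)).to₂
  exact ((Primrec.list_length.comp h1).of_eq fun a => by
    rw [filterMap_bif]; rfl)

private lemma mem_Aset_iff {m : ℕ} : m ∈ Aset ↔ ∃ s, 0 < Ffun m s := by
  constructor
  · rintro ⟨j, h1, h2, s, h3⟩
    refine ⟨s, ?_⟩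
    have hjm : j < m + 1 := by
      have := @Nat.lt_two_pow_self j
      omega
    have hj : j ∈ (List.range (m + 1)).filter (apred m s) := by
      rw [List.mem_filter]
      exact ⟨List.mem_range.2 hjm, by simp [apred, h1, h2, h3]⟩
    exact List.length_pos_iff.2 (List.ne_nil_of_mem hj)
  · rintro ⟨s, hs⟩
    obtain ⟨j, hj⟩ := List.exists_mem_of_length_pos hs
    rw [List.mem_filter] at hj
    have := hj.2
    simp only [apred, Bool.and_eq_true, decide_eq_true_eq] at this
    exact ⟨j, this.1.1, this.1.2, s, this.2⟩

private lemma ce_Aset : CE Aset := by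
  refine ⟨fun m => Nat.rfind fun s => Part.some (decide (0 < Ffun m s)), ?_, ?_⟩
  · apply Partrec.rfind
    have hb : Computable₂ fun m s : ℕ => decide (0 < Ffun m s) :=
      Primrec.to_comp (Primrec.nat_lt.comp (Primrec.const 0) Ffun_primrec).decide
    exact hb.partrec₂
  · ext m
    simp only [Set.mem_setOf_eq]
    rw [mem_Aset_iff]
    refine Iff.trans ?_ Nat.rfind_dom.symm
    constructor
    · rintro ⟨s, hs⟩
      exact ⟨s, by simpa using hs, fun {_} _ => trivial⟩
    · rintro ⟨n, h, -⟩
      exact ⟨n, by simpa using h⟩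

end StmtTenAux

section StmtTenDensity

open Nat.Partrec (Code)
open Nat.Partrec.Code

open scoped Classical in
private lemma pd_eq (S : Set ℕ) (n : ℕ) :
    partialDensity S n = ((Finset.range (n + 1)).filter (· ∈ S)).card / ((n : ℝ) + 1) := rfl

private lemma pd_nonneg (S : Set ℕ) (n : ℕ) : 0 ≤ partialDensity S n := by
  rw [pd_eq]; positivity

open scoped Classical in
private lemma pd_mono {S T : Set ℕ} (h : S ⊆ T) (n : ℕ) :
    partialDensity S n ≤ partialDensity T n := by
  rw [pd_eq, pd_eq]
  gcongr

private lemma hasDensity_zero_of_subset {S T : Set ℕ} (h : S ⊆ T) (hT : HasDensity T 0) :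
    HasDensity S 0 :=
  squeeze_zero (fun n => pd_nonneg S n) (fun n => pd_mono h n) hT

open scoped Classical in
private lemma hasDensity_compl_zero {D : Set ℕ} (hD : HasDensity D 1) : HasDensity Dᶜ 0 := by
  have key : ∀ n, partialDensity Dᶜ n = 1 - partialDensity D n := by
    intro n
    rw [pd_eq, pd_eq, Finset.card_filter, Finset.card_filter]
    push_cast
    rw [eq_sub_iff_add_eq, ← add_div, div_eq_one_iff_eq (by positivity)]
    rw [← Finset.sum_add_distrib]
    have hpt : ∀ x ∈ Finset.range (n + 1),
        ((if x ∈ Dᶜ then (1 : ℝ) else 0) + if x ∈ D then 1 else 0) = 1 := by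
      intro x _
      by_cases h : x ∈ D <;> simp [h]
    rw [Finset.sum_congr rfl hpt, Finset.sum_const, Finset.card_range]
    simp
  have h2 : Filter.Tendsto (fun n => 1 - partialDensity D n) Filter.atTop (nhds 0) := by
    have := Filter.Tendsto.const_sub 1 hD
    simpa using this
  exact Filter.Tendsto.congr (fun n => (key n).symm) h2

private lemma card_filter_eq_length (p : ℕ → Bool) (N : ℕ) :
    ((Finset.range N).filter (fun x => p x = true)).card = ((List.range N).filter p).length := by
  induction N with
  | zero => rfl
  | succ n ih =>
    rw [List.range_succ, List.filter_append, List.length_append, Finset.range_add_one,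
      Finset.filter_insert]
    by_cases h : p n = true
    · rw [if_pos h, Finset.card_insert_of_notMem (by simp)]
      simp [h, ih]
    · rw [if_neg h]
      simp only [List.filter_cons, List.filter_nil]
      rw [if_neg h]
      simp [ih]

private lemma pow_interval_unique {x a b : ℕ} (ha1 : 2 ^ a ≤ x) (ha2 : x < 2 ^ (a + 1))
    (hb1 : 2 ^ b ≤ x) (hb2 : x < 2 ^ (b + 1)) : a = b := by
  by_contra hne
  rcases Nat.lt_or_ge a b with hab | hge
  · have : 2 ^ (a + 1) ≤ 2 ^ b := Nat.pow_le_pow_right (by norm_num) hab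
    omega
  · have hba : b + 1 ≤ a := by omega
    have : 2 ^ (b + 1) ≤ 2 ^ a := Nat.pow_le_pow_right (by norm_num) hba
    omega

end StmtTenDensity

section StmtTenKey

open Nat.Partrec (Code)
open Nat.Partrec.Code

open scoped Classical in
private lemma key_count (c : Code) (j : ℕ) (hj : j.unpair.1 = Encodable.encode c) :
    2 ^ (j + 1) ≤
      4 * ((Finset.range (2 ^ (j + 1))).filter
        (· ∈ symmDiff Aset {x | (eval c x).Dom}ᶜ)).card := by
  have hcode : Denumerable.ofNat Code j.unpair.1 = c := by
    rw [hj]; exact Denumerable.ofNat_encode c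
  set N := 2 ^ (j + 1) with hN
  set SD := (Finset.range N).filter (· ∈ symmDiff Aset {x | (eval c x).Dom}ᶜ) with hSD
  have hps : (2 : ℕ) ^ (j + 1) = 2 * 2 ^ j := by ring
  by_cases htr : trigger j
  · obtain ⟨s, hs⟩ := htr
    have hsub : (Finset.range N).filter
        (fun x => (decide (2 ^ j ≤ x) &&
          (evaln s (Denumerable.ofNat Code j.unpair.1) x).isSome) = true) ⊆ SD := by
      intro x hx
      rw [Finset.mem_filter] at hx
      obtain ⟨hxr, hw⟩ := hx
      rw [Bool.and_eq_true, decide_eq_true_eq] at hw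
      have hxW : (eval c x).Dom := by
        rw [hcode] at hw
        obtain ⟨y, hy⟩ := Option.isSome_iff_exists.1 hw.2
        exact Part.dom_iff_mem.2 ⟨y, evaln_sound (show y ∈ evaln s c x from hy)⟩
      have hxA : x ∈ Aset :=
        ⟨j, hw.1, by simpa [hN] using Finset.mem_range.1 hxr, ⟨s, hs⟩⟩
      refine Finset.mem_filter.2 ⟨hxr, Set.mem_symmDiff.2 (Or.inl ⟨hxA, fun hcc => hcc hxW⟩)⟩
    have hcnt : cnt j s ≤ SD.card := by
      rw [cnt, ← card_filter_eq_length]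
      exact Finset.card_le_card hsub
    omega
  · rw [trigger] at htr
    push_neg at htr
    set B := (Finset.range N).filter (fun x => 2 ^ j ≤ x) with hB
    set Fs := B.filter (· ∈ {x | (eval c x).Dom}) with hFs
    set Gs := B.filter (· ∈ {x | (eval c x).Dom}ᶜ) with hGs
    have hFG : B.card ≤ Fs.card + Gs.card := by
      refine le_trans (Finset.card_le_card ?_) (Finset.card_union_le _ _)
      intro x hx
      by_cases h : (eval c x).Dom
      · exact Finset.mem_union_left _ (Finset.mem_filter.2 ⟨hx, h⟩)
      · exact Finset.mem_union_right _ (Finset.mem_filter.2 ⟨hx, h⟩)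
    have hBcard : B.card = 2 ^ j := by
      have hBI : B = Finset.Ico (2 ^ j) N := by
        ext x
        simp only [hB, Finset.mem_filter, Finset.mem_range, Finset.mem_Ico]
        tauto
      rw [hBI, Nat.card_Ico]
      omega
    have hex : ∀ x ∈ Fs, ∃ k, (evaln k c x).isSome := by
      intro x hx
      have hd : (eval c x).Dom := (Finset.mem_filter.1 hx).2
      obtain ⟨y, hy⟩ := Part.dom_iff_mem.1 hd
      obtain ⟨k, hk⟩ := evaln_complete.1 hy
      exact ⟨k, Option.isSome_iff_exists.2 ⟨y, hk⟩⟩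
    choose! g hg using hex
    set s := Fs.sup g with hsup
    have hFsub : Fs ⊆ (Finset.range N).filter
        (fun x => (decide (2 ^ j ≤ x) &&
          (evaln s (Denumerable.ofNat Code j.unpair.1) x).isSome) = true) := by
      intro x hx
      have hxB : x ∈ B := (Finset.mem_filter.1 hx).1
      have hxr : x ∈ Finset.range N := (Finset.mem_filter.1 hxB).1
      have hxle : 2 ^ j ≤ x := (Finset.mem_filter.1 hxB).2
      obtain ⟨y, hy⟩ := Option.isSome_iff_exists.1 (hg x hx)
      have hys : y ∈ evaln s c x :=
        evaln_mono (Finset.le_sup hx) (show y ∈ evaln (g x) c x from hy)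
      have hsome : (evaln s c x).isSome := Option.isSome_iff_exists.2 ⟨y, hys⟩
      refine Finset.mem_filter.2 ⟨hxr, ?_⟩
      rw [Bool.and_eq_true, decide_eq_true_eq, hcode]
      exact ⟨hxle, hsome⟩
    have hF : 2 * Fs.card < 2 ^ j := by
      have h1 : Fs.card ≤ cnt j s := by
        rw [cnt, ← card_filter_eq_length]
        exact Finset.card_le_card hFsub
      have := htr s
      omega
    have hGsub : Gs ⊆ SD := by
      intro x hx
      rw [Finset.mem_filter] at hx
      obtain ⟨hxB, hxW⟩ := hx
      rw [Finset.mem_filter] at hxB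
      refine Finset.mem_filter.2 ⟨hxB.1, Set.mem_symmDiff.2 (Or.inr ⟨hxW, ?_⟩)⟩
      rintro ⟨j', h1, h2, htr'⟩
      have hxN : x < 2 ^ (j + 1) := by simpa [hN] using Finset.mem_range.1 hxB.1
      have hjj : j' = j := pow_interval_unique h1 h2 hxB.2 hxN
      subst hjj
      obtain ⟨s', hs'⟩ := htr'
      have := htr s'
      omega
    have hG : Gs.card ≤ SD.card := Finset.card_le_card hGsub
    omega

end StmtTenKey

section StmtTenFinal

open Nat.Partrec (Code)
open Nat.Partrec.Code

open scoped Classical in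
private lemma density_fail (W : Set ℕ) (hW : CE W) :
    ¬HasDensity (symmDiff Aset Wᶜ) 0 := by
  obtain ⟨f, hf, rfl⟩ := hW
  obtain ⟨c, hc⟩ := exists_code.1 (Partrec.nat_iff.1 hf)
  subst hc
  intro h
  have hev : ∀ᶠ n in Filter.atTop,
      partialDensity (symmDiff Aset {x | (eval c x).Dom}ᶜ) n < 1 / 4 :=
    Filter.Tendsto.eventually_lt_const (by norm_num) h
  obtain ⟨N, hN⟩ := Filter.eventually_atTop.1 hev
  set j := Nat.pair (Encodable.encode c) N with hjdef
  have hj : j.unpair.1 = Encodable.encode c := by rw [hjdef, Nat.unpair_pair]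
  have hkey := key_count c j hj
  set n := 2 ^ (j + 1) - 1 with hn
  have hpow : 1 ≤ 2 ^ (j + 1) := Nat.one_le_two_pow
  have hn1 : n + 1 = 2 ^ (j + 1) := by omega
  have hjN : N ≤ n := by
    have h1 : N ≤ j := Nat.right_le_pair _ _
    have h2 : j + 1 < 2 ^ (j + 1) := Nat.lt_two_pow_self
    omega
  have hlt := hN n hjN
  rw [pd_eq] at hlt
  rw [← hn1] at hkey
  have hcast : ((n : ℝ) + 1) ≤ 4 *
      (((Finset.range (n + 1)).filter
        (· ∈ symmDiff Aset {x | (eval c x).Dom}ᶜ)).card : ℝ) := by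
    exact_mod_cast hkey
  have hpos : (0 : ℝ) < (n : ℝ) + 1 := by positivity
  rw [div_lt_div_iff₀ hpos (by norm_num)] at hlt
  linarith

private lemma ce_of_rePred {p : ℕ → Prop} (h : REPred p) : CE {x | p x} := by
  refine ⟨fun a => (Part.assert (p a) fun _ => Part.some ()).map fun _ => 0,
    Partrec.map h ((Computable.const 0).to₂), ?_⟩
  ext x
  simp [Part.assert]

/-- there is a c.e. set not generically similar to any co-c.e. set;
consequently it is neither coarsely computable nor generically computable. -/
theorem stmt10 :
    ∃ A : Set ℕ, CE A ∧ (∀ W : Set ℕ, CE W → ¬HasDensity (symmDiff A Wᶜ) 0) ∧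
      ¬CoarselyComputable A ∧ ¬GenericallyComputable A := by
  refine ⟨Aset, ce_Aset, density_fail, ?_, ?_⟩
  · rintro ⟨C, hC, hsim⟩
    have hCc : CE Cᶜ := by
      have := (ComputablePred.not hC).to_re
      have h2 := ce_of_rePred this
      simpa [Set.compl_def] using h2
    have := density_fail Cᶜ hCc
    rw [compl_compl] at this
    exact this hsim
  · rintro ⟨Φ, hΦ, hval, hdom⟩
    set W := {x | (Nat.rfind fun _ => (fun m => decide (m = 0)) <$> Φ x).Dom} with hWdef
    have hWce : CE W := by
      refine ⟨fun x => Nat.rfind fun _ => (fun m => decide (m = 0)) <$> Φ x, ?_, rfl⟩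
      apply Partrec.rfind
      have h1 : Partrec fun q : ℕ × ℕ => (Φ q.1).map fun m => decide (m = 0) := by
        apply Partrec.map (hΦ.comp Computable.fst)
        exact (Primrec.to_comp (Primrec.eq.comp Primrec.snd (Primrec.const 0)).decide).to₂
      exact h1.to₂
    have hWiff : ∀ x, x ∈ W ↔ 0 ∈ Φ x := by
      intro x
      rw [hWdef, Set.mem_setOf_eq]
      refine Nat.rfind_dom.trans ?_
      constructor
      · rintro ⟨nn, htrue, -⟩
        obtain ⟨m, hm, hd⟩ := (Part.mem_map_iff _).1 htrue
        have : m = 0 := by simpa using hd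
        exact this ▸ hm
      · intro h0
        refine ⟨0, ?_, fun {m} hm => by omega⟩
        exact (Part.mem_map_iff _).2 ⟨0, h0, by simp⟩
    have hsub : symmDiff Aset Wᶜ ⊆ {x | (Φ x).Dom}ᶜ := by
      intro x hx
      rw [Set.mem_symmDiff] at hx
      intro hd
      obtain ⟨m, hm⟩ := Part.dom_iff_mem.1 hd
      have hmc := hval x m hm
      rcases hx with ⟨hA, hW⟩ | ⟨hW, hA⟩
      · rw [Set.notMem_compl_iff] at hW
        have h0 : (0 : ℕ) ∈ Φ x := (hWiff x).1 hW
        have : m = 0 := Part.mem_unique hm h0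
        rw [charFun, if_pos hA] at hmc
        omega
      · have h0 : m = 0 := by rw [charFun, if_neg hA] at hmc; exact hmc
        exact hW ((hWiff x).2 (h0 ▸ hm))
    exact density_fail W hWce
      (hasDensity_zero_of_subset hsub (hasDensity_compl_zero hdom))

end StmtTenFinal
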